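/- Let A, B be 2×2 complex matrices satisfying condition (*) (rank of the 2×4 concatenation (A B) is 2 and A J A* = B J B*), and assume in addition rank(A) = 1. Then for all vectors ξ, η ∈ ℂ², the equality A ξ = B η forces A ξ = 0 (and hence B η = 0); consequently A J A* = 0 and B J B* = 0. -/

import Mathlib

open Matrix

/-- The matrix `J = [[0,-1],[1,0]]`. -/
def Jmat : Matrix (Fin 2) (Fin 2) ℂ := !![0, -1; 1, 0]

lemma Jmat_det : Jmat.det = 1 := by
  simp [Jmat]

lemma rank_le_one_of_det_eq_zero {M : Matrix (Fin 2) (Fin 2) ℂ} (h : M.det = 0) :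
    M.rank ≤ 1 := by
  by_contra hc
  push_neg at hc
  have h2 : M.rank = 2 := le_antisymm (by simpa using M.rank_le_card_width) hc
  have hfin : Module.finrank ℂ (LinearMap.range M.mulVecLin) = 2 := h2
  have htop : LinearMap.range M.mulVecLin = ⊤ := by
    apply Submodule.eq_top_of_finrank_eq
    rw [hfin]
    simp [Module.finrank_pi]
  have hsurj : Function.Surjective M.mulVec := by
    intro y
    obtain ⟨x, hx⟩ := LinearMap.range_eq_top.mp htop y
    exact ⟨x, hx⟩
  have hU : IsUnit M := Matrix.mulVec_surjective_iff_isUnit.mp hsurj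
  have hUd := (Matrix.isUnit_iff_isUnit_det M).mp hU
  rw [h] at hUd
  exact hUd.ne_zero rfl

lemma det_eq_zero_of_rank_le_one {M : Matrix (Fin 2) (Fin 2) ℂ} (h : M.rank ≤ 1) :
    M.det = 0 := by
  by_contra hd
  have hU : IsUnit M := (Matrix.isUnit_iff_isUnit_det M).mpr (Ne.isUnit hd)
  have := Matrix.rank_of_isUnit M hU
  rw [this] at h
  simp at h

lemma range_fromColumns (A B : Matrix (Fin 2) (Fin 2) ℂ) :
    LinearMap.range (Matrix.fromCols A B).mulVecLin
      = LinearMap.range A.mulVecLin ⊔ LinearMap.range B.mulVecLin := by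
  apply le_antisymm
  · rintro _ ⟨x, rfl⟩
    have hx : x = Sum.elim (x ∘ Sum.inl) (x ∘ Sum.inr) := by
      funext i; cases i <;> rfl
    rw [Matrix.mulVecLin_apply, hx, Matrix.fromCols_mulVec_sumElim]
    exact Submodule.add_mem_sup ⟨_, rfl⟩ ⟨_, rfl⟩
  · rw [sup_le_iff]
    constructor
    · rintro _ ⟨ξ, rfl⟩
      exact ⟨Sum.elim ξ 0, by
        simp [Matrix.mulVecLin_apply, Matrix.fromCols_mulVec_sumElim]⟩
    · rintro _ ⟨η, rfl⟩
      exact ⟨Sum.elim 0 η, by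
        simp [Matrix.mulVecLin_apply, Matrix.fromCols_mulVec_sumElim]⟩

/-- Claim (A.18): under condition (*) with `rank A = 1`, `A ξ = B η` forces
`A ξ = 0 = B η`, and consequently `A J Aᴴ = 0` and `B J Bᴴ = 0`. -/
theorem rankOne_AeqB_forces_zero (A B : Matrix (Fin 2) (Fin 2) ℂ)
    (hrank : (Matrix.fromCols A B).rank = 2)
    (hsym : A * Jmat * Aᴴ = B * Jmat * Bᴴ)
    (hA : A.rank = 1) :
    (∀ ξ η : Fin 2 → ℂ, A.mulVec ξ = B.mulVec η →
      A.mulVec ξ = 0 ∧ B.mulVec η = 0) ∧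
    A * Jmat * Aᴴ = 0 ∧ B * Jmat * Bᴴ = 0 := by
  -- det A = 0
  have hdetA : A.det = 0 := det_eq_zero_of_rank_le_one hA.le
  -- det B = 0
  have hdetB : B.det = 0 := by
    have h := congrArg Matrix.det hsym
    rw [Matrix.det_mul, Matrix.det_mul, Matrix.det_mul, Matrix.det_mul,
      Matrix.det_conjTranspose, Matrix.det_conjTranspose, Jmat_det, hdetA] at h
    simp only [zero_mul, mul_one] at h
    rcases mul_eq_zero.mp h.symm with h0 | h0
    · exact h0
    · exact star_eq_zero.mp h0
  have hBrank : B.rank ≤ 1 := rank_le_one_of_det_eq_zero hdetB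
  -- key claim
  have key : ∀ ξ η : Fin 2 → ℂ, A.mulVec ξ = B.mulVec η → A.mulVec ξ = 0 := by
    intro ξ η heq
    by_contra hv
    set v := A.mulVec ξ with hvdef
    have hvA : v ∈ LinearMap.range A.mulVecLin := ⟨ξ, rfl⟩
    have hvB : v ∈ LinearMap.range B.mulVecLin := ⟨η, heq.symm⟩
    have hA' : Module.finrank ℂ (LinearMap.range A.mulVecLin) = 1 := hA
    have hB' : Module.finrank ℂ (LinearMap.range B.mulVecLin) ≤ 1 := hBrank
    have hspan1 : Module.finrank ℂ (Submodule.span ℂ ({v} : Set (Fin 2 → ℂ))) = 1 :=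
      finrank_span_singleton hv
    have hspanA : Submodule.span ℂ ({v} : Set (Fin 2 → ℂ)) = LinearMap.range A.mulVecLin := by
      refine Submodule.eq_of_le_of_finrank_le (Submodule.span_le.mpr ?_) ?_
      · simp only [Set.singleton_subset_iff, SetLike.mem_coe]; exact hvA
      · rw [hspan1, hA']
    have hspanB : Submodule.span ℂ ({v} : Set (Fin 2 → ℂ)) = LinearMap.range B.mulVecLin := by
      refine Submodule.eq_of_le_of_finrank_le (Submodule.span_le.mpr ?_) ?_
      · simpa using hvB
      · rw [hspan1]; exact hB'
    have hfc : (Matrix.fromCols A B).rank = 1 := by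
      show Module.finrank ℂ (LinearMap.range (Matrix.fromCols A B).mulVecLin) = 1
      rw [range_fromColumns, ← hspanA, ← hspanB, sup_idem, hspan1]
    omega
  -- A J Aᴴ = 0
  have hS : A * Jmat * Aᴴ = 0 := by
    ext i j
    have h1 : (A * Jmat * Aᴴ).mulVec (Pi.single j 1)
        = A.mulVec (Jmat.mulVec (Aᴴ.mulVec (Pi.single j 1))) := by
      rw [Matrix.mulVec_mulVec, Matrix.mulVec_mulVec]
    have h2 : (B * Jmat * Bᴴ).mulVec (Pi.single j 1)
        = B.mulVec (Jmat.mulVec (Bᴴ.mulVec (Pi.single j 1))) := by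
      rw [Matrix.mulVec_mulVec, Matrix.mulVec_mulVec]
    have hz := key (Jmat.mulVec (Aᴴ.mulVec (Pi.single j 1)))
      (Jmat.mulVec (Bᴴ.mulVec (Pi.single j 1))) (by rw [← h1, ← h2, hsym])
    rw [← h1] at hz
    have := congrFun hz i
    simpa using this
  refine ⟨fun ξ η h => ⟨key ξ η h, by rw [← h]; exact key ξ η h⟩, hS, by rw [← hsym]; exact hS⟩
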